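/- Let Δ₊ be the semi-simplex category. For every w : ℕ → Bool, the assignment declaring a sieve S on [k] to be covering if and only if every morphism f : [l] ⟶ [k] with w l = false belongs to S, defines a Grothendieck topology J_w on Δ₊; moreover the map w ↦ J_w is a bijection from ℕ → Bool onto the set of all Grothendieck topologies on Δ₊. -/

import Mathlib

open CategoryTheory Simplicial Opposite CategoryTheory.GrothendieckTopology

universe w

/-- The semi-simplex category: the wide subcategory of `SimplexCategory`
whose morphisms are the monomorphisms. -/
abbrev SemiSimplexCat : Type :=
  WideSubcategory (MorphismProperty.monomorphisms SimplexCategory)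

/-- The coface map `δ i : [k] ⟶ [k+1]` as a morphism of the semi-simplex category. -/
def semiδ {k : ℕ} (i : Fin (k + 2)) : (⟨⦋k⦌⟩ : SemiSimplexCat) ⟶ ⟨⦋k + 1⦌⟩ :=
  ⟨SimplexCategory.δ i, inferInstanceAs (Mono (SimplexCategory.δ i))⟩


namespace Stmt5Aux

lemma len_le {X Y : SemiSimplexCat} (f : X ⟶ Y) : X.obj.len ≤ Y.obj.len :=
  @SimplexCategory.len_le_of_mono _ _ f.1 f.2

lemma hom_self_eq_id {X : SemiSimplexCat} (f : X ⟶ X) : f = 𝟙 X := by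
  have : Mono f.1 := f.2
  exact WideSubcategory.hom_ext (h := SimplexCategory.eq_id_of_mono f.1)

/-- boundary sieve -/
def Sbd (X : SemiSimplexCat) : Sieve X where
  arrows Y _ := Y.obj.len < X.obj.len
  downward_closed := fun {Y Z f} hf g => lt_of_le_of_lt (len_le g) hf

lemma le_Sbd {X : SemiSimplexCat} {S : Sieve X} (h : ¬ S.arrows (𝟙 X)) : S ≤ Sbd X := by
  intro Y f hf
  rcases lt_or_eq_of_le (len_le f) with h' | h'
  · exact h'
  · exfalso
    have hY : Y = X := by cases X; cases Y; cases (SimplexCategory.ext h'); rfl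
    subst hY
    rw [hom_self_eq_id f] at hf
    exact h hf

def Jw (w : ℕ → Bool) : GrothendieckTopology SemiSimplexCat where
  sieves X := {S | ∀ (Y : SemiSimplexCat) (f : Y ⟶ X), w Y.obj.len = false → S.arrows f}
  top_mem' := fun X Y f _ => trivial
  pullback_stable' := fun X Y S g hS Z f hf => hS Z (f ≫ g) hf
  transitive' := fun X S hS R hR Y f hf => by
    have hfS : S.arrows f := hS Y f hf
    have := hR hfS Y (𝟙 Y) hf
    simpa using this

lemma Sbd_mem_Jw (w : ℕ → Bool) (X : SemiSimplexCat) :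
    Sbd X ∈ Jw w X ↔ w X.obj.len = true := by
  constructor
  · intro h
    by_contra hw
    have := h X (𝟙 X) (by simpa using hw)
    exact lt_irrefl _ this
  · intro hw Y f hf
    rcases lt_or_eq_of_le (len_le f) with h' | h'
    · exact h'
    · rw [h'] at hf; rw [hw] at hf; exact absurd hf (by simp)

lemma mk_eq (X : SemiSimplexCat) : (⟨⦋X.obj.len⦌⟩ : SemiSimplexCat) = X := by
  cases X; rw [SimplexCategory.mk_len]

/-- key surjectivity lemma -/
lemma mem_of_all (J : GrothendieckTopology SemiSimplexCat)
    (w : ℕ → Bool) (hw : ∀ X : SemiSimplexCat, w X.obj.len = true ↔ Sbd X ∈ J X) :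
    ∀ (n : ℕ) (X : SemiSimplexCat), X.obj.len = n → ∀ S : Sieve X,
      (∀ (Y : SemiSimplexCat) (f : Y ⟶ X), w Y.obj.len = false → S.arrows f) → S ∈ J X := by
  intro n
  induction n using Nat.strong_induction_on with
  | _ n IH =>
    intro X hn S hS
    subst hn
    by_cases hw' : w X.obj.len = true
    · refine J.transitive ((hw X).1 hw') S ?_
      intro Y f hf
      exact IH Y.obj.len hf Y rfl _ (fun Z g hg => hS Z (g ≫ f) hg)
    · have hid : S.arrows (𝟙 X) := hS X (𝟙 X) (by simpa using hw')
      rw [Sieve.id_mem_iff_eq_top.mp hid]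
      exact J.top_mem X

theorem stmt5' :
    ∃ T : (ℕ → Bool) → GrothendieckTopology SemiSimplexCat,
      (∀ (w : ℕ → Bool) (X : SemiSimplexCat) (S : Sieve X),
        S ∈ T w X ↔ ∀ (Y : SemiSimplexCat) (f : Y ⟶ X), w Y.obj.len = false → S.arrows f) ∧
      Function.Bijective T := by
  refine ⟨Jw, fun w X S => Iff.rfl, ?_, ?_⟩
  · intro w w' h
    funext l
    have h1 := Sbd_mem_Jw w (⟨⦋l⦌⟩ : SemiSimplexCat)
    have h2 := Sbd_mem_Jw w' (⟨⦋l⦌⟩ : SemiSimplexCat)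
    rw [h] at h1
    have : ((⟨⦋l⦌⟩ : SemiSimplexCat).obj.len) = l := SimplexCategory.len_mk l
    rw [this] at h1 h2
    rw [Bool.eq_iff_iff (a := w l), h1.symm.trans h2]
  · intro J
    classical
    set w : ℕ → Bool := fun l => decide (Sbd (⟨⦋l⦌⟩ : SemiSimplexCat) ∈ J ⟨⦋l⦌⟩) with hwdef
    have hw : ∀ X : SemiSimplexCat, w X.obj.len = true ↔ Sbd X ∈ J X := by
      intro X
      rw [hwdef]
      rw [decide_eq_true_eq]
    refine ⟨w, ?_⟩
    ext X S
    constructor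
    · intro hS
      exact mem_of_all J w hw X.obj.len X rfl S hS
    · intro hS Y f hf
      by_contra hfS
      have hpb : S.pullback f ∈ J Y := J.pullback_stable f hS
      have hle : S.pullback f ≤ Sbd Y := by
        apply le_Sbd
        simpa [Sieve.pullback_apply] using hfS
      have : Sbd Y ∈ J Y := J.superset_covering hle hpb
      rw [← hw Y] at this
      rw [hf] at this
      exact absurd this (by simp)

end Stmt5Aux


theorem stmt5 :
    ∃ T : (ℕ → Bool) → GrothendieckTopology SemiSimplexCat,
      (∀ (w : ℕ → Bool) (X : SemiSimplexCat) (S : Sieve X),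
        S ∈ T w X ↔ ∀ (Y : SemiSimplexCat) (f : Y ⟶ X), w Y.obj.len = false → S.arrows f) ∧
      Function.Bijective T := by
  exact Stmt5Aux.stmt5'
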